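/- arXiv:1610.02397 — 3 statements merged into one kernel-verified Lean document; each statement's English description precedes it below -/
import Mathlib

section
/- Let A be a commutative ring, d a natural number, s_0,…,s_d, a_0,…,a_d ∈ A with ∑ a_i s_i = 1, and f := ∑ a_i x_i ∈ A[x_0,…,x_d], a homogeneous element of degree 1 for the grading of A[x_0,…,x_d] by total degree. Let R be the degree-zero part of the localization of A[x_0,…,x_d] away from f (the homogeneous localization at f), regarded as an A-algebra, and let ξ_i ∈ R denote the class of x_i/f. Then R is generated as an A-algebra by the elements ξ_0,…,ξ_d; equivalently, the A-subalgebra of R generated by {ξ_0,…,ξ_d} is all of R. -/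
open MvPolynomial HomogeneousLocalization

attribute [local instance] MvPolynomial.gradedAlgebra

noncomputable section

variable {A : Type*} [CommRing A] {d : ℕ}

/-- A linear form `∑ cᵢ xᵢ` is homogeneous of degree `1`. -/
lemma linear_mem_one (c : Fin (d + 1) → A) :
    (∑ i, C (c i) * X i : MvPolynomial (Fin (d + 1)) A) ∈
      homogeneousSubmodule (Fin (d + 1)) A 1 := by
  rw [mem_homogeneousSubmodule]
  apply MvPolynomial.IsHomogeneous.sum
  intro i _
  simpa using (isHomogeneous_C _ (c i)).mul (isHomogeneous_X _ i)

variable (a : Fin (d + 1) → A)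

/-- `Rloc a` is the degree-zero part of the localization of `A[x_0, …, x_d]`
away from the degree-one element `f = ∑ aᵢ xᵢ` (the homogeneous localization at `f`),
where `A[x_0, …, x_d]` is graded by total degree. -/
abbrev Rloc : Type _ := HomogeneousLocalization.Away (homogeneousSubmodule (Fin (d + 1)) A)
    (∑ i, C (a i) * X i)

/-- `ξ a i` is the class of `xᵢ / f` in the homogeneous localization `Rloc a`. -/
def ξ (i : Fin (d + 1)) : Rloc a :=
  HomogeneousLocalization.mk ⟨1, ⟨X i, (mem_homogeneousSubmodule _ _).2 (isHomogeneous_X _ i)⟩,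
    ⟨∑ j, C (a j) * X j, linear_mem_one a⟩, Submonoid.mem_powers _⟩

/-- `Rloc a` is an `A`-algebra, via `c ↦ (c·f)/f`, i.e. the composite of the structure map
`A → A[x_0, …, x_d]`, the projection to the degree-zero component, and the map from the
degree-zero component into the homogeneous localization. -/
instance : Algebra A (Rloc a) :=
  ((fromZeroRingHom _ _).comp ((GradedRing.projZeroRingHom' _).comp
    (algebraMap A (MvPolynomial (Fin (d + 1)) A)))).toAlgebra


lemma loc_mk_prod {P : Type*} [CommMonoid P] {M : Submonoid P} {ι : Type*}
    (s : Finset ι) (g : ι → P) (h : ι → M) :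
    ∏ i ∈ s, (Localization.mk (g i) (h i)) =
      Localization.mk (∏ i ∈ s, g i) (∏ i ∈ s, h i) := by
  classical
  induction s using Finset.cons_induction with
  | empty => simp [Localization.mk_one]
  | cons i s hi ih => rw [Finset.prod_cons, Finset.prod_cons, Finset.prod_cons, ih,
      Localization.mk_mul]

lemma rloc_val_sum {ι : Type*} (s : Finset ι) (g : ι → Rloc a) :
    (∑ i ∈ s, g i).val = ∑ i ∈ s, (g i).val := by
  classical
  induction s using Finset.cons_induction with
  | empty => exact val_zero
  | cons i s hi ih => rw [Finset.sum_cons, Finset.sum_cons, val_add, ih]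

lemma rloc_val_prod {ι : Type*} (s : Finset ι) (g : ι → Rloc a) :
    (∏ i ∈ s, g i).val = ∏ i ∈ s, (g i).val := by
  classical
  induction s using Finset.cons_induction with
  | empty => exact val_one
  | cons i s hi ih => rw [Finset.prod_cons, Finset.prod_cons, val_mul, ih]

lemma val_xi (i : Fin (d + 1)) :
    (ξ a i).val = Localization.mk (X i)
      ⟨∑ j, C (a j) * X j, Submonoid.mem_powers _⟩ := by
  rw [ξ, val_mk]

lemma val_algebraMap' (c : A) :
    (algebraMap A (Rloc a) c).val = Localization.mk (C c) 1 := by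
  show (HomogeneousLocalization.mk _).val = _
  rw [val_mk]
  congr 1
  simpa using DirectSum.decompose_of_mem_same _ (isHomogeneous_C _ c)

variable (s : Fin (d + 1) → A)

/-- `Jid s a` is the localized ideal of the section: the ideal of `Rloc a` generated by the
elements `sⱼ ξᵢ - sᵢ ξⱼ` for all `0 ≤ i, j ≤ d`. -/
def Jid : Ideal (Rloc a) :=
  Ideal.span (Set.range fun p : Fin (d + 1) × Fin (d + 1) =>
    s p.2 • ξ a p.1 - s p.1 • ξ a p.2)

/-- `Rloc a` is generated as an `A`-algebra by `ξ_0, …, ξ_d`. -/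
theorem stmt_2 {A : Type*} [CommRing A] (d : ℕ) (s a : Fin (d + 1) → A)
    (h : ∑ i, a i * s i = 1) :
    Algebra.adjoin A (Set.range (ξ a)) = ⊤ := by
  classical
  set f : MvPolynomial (Fin (d + 1)) A := ∑ i, C (a i) * X i with hf
  rw [eq_top_iff]
  rintro z -
  obtain ⟨⟨n, ⟨p, hp⟩, ⟨den, hden⟩, ⟨j, (hjden : f ^ j = den)⟩⟩, rfl⟩ := mk_surjective z
  subst hjden
  by_cases hfj : f ^ j = 0
  · rw [mk_eq_zero_of_den _ (Subtype.ext hfj)]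
    exact zero_mem _
  · have hn : n = j := by
      have := DirectSum.degree_eq_of_mem_mem (homogeneousSubmodule (Fin (d + 1)) A) hden
        (SetLike.pow_mem_graded j (linear_mem_one a)) hfj
      simpa using this
    subst hn
    have key : (HomogeneousLocalization.mk
        ⟨n, ⟨p, hp⟩, ⟨f ^ n, hden⟩, ⟨n, rfl⟩⟩ : Rloc a) =
        ∑ α ∈ p.support, algebraMap A (Rloc a) (coeff α p) * ∏ i, ξ a i ^ α i := by
      apply val_injective
      rw [val_mk, rloc_val_sum]
      simp only [val_mul, val_algebraMap', rloc_val_prod, val_pow, val_xi,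
        Localization.mk_pow]
      trans (∑ α ∈ p.support, Localization.mk (monomial α (coeff α p))
        (⟨f ^ n, ⟨n, rfl⟩⟩ : Submonoid.powers f))
      · rw [← Localization.mk_sum, support_sum_monomial_coeff]
      refine Finset.sum_congr rfl fun α hα => ?_
      rw [loc_mk_prod, Localization.mk_mul, one_mul]
      have hdeg : ∑ i, α i = n := by
        have h1 := ((mem_homogeneousSubmodule _ _).1 hp) (mem_support_iff.1 hα)
        rw [show Finsupp.weight (1 : Fin (d + 1) → ℕ) = Finsupp.degree from
          Finsupp.degree_eq_weight_one.symm, Finsupp.degree_apply] at h1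
        rw [← h1]
        exact (Finset.sum_subset (Finset.subset_univ _)
          (fun i _ hi => Finsupp.notMem_support_iff.1 hi)).symm
      congr 1
      · rw [monomial_eq, Finsupp.prod_pow]
      · exact Subtype.ext (by push_cast; rw [Finset.prod_pow_eq_pow_sum, hdeg])
    rw [key]
    apply Subalgebra.sum_mem
    intro α hα
    exact Subalgebra.mul_mem _ (Subalgebra.algebraMap_mem _ _)
      (Subalgebra.prod_mem _ fun i _ => Subalgebra.pow_mem _
        (Algebra.subset_adjoin (Set.mem_range_self i)) _)

end
end

section
/- Let A be a commutative ring, d a natural number, s_0,…,s_d, a_0,…,a_d ∈ A with ∑ a_i s_i = 1, and f := ∑ a_i x_i ∈ A[x_0,…,x_d]. Let R be the degree-zero part of the localization of A[x_0,…,x_d] away from f, set ξ_i := class of x_i/f in R and y_i := ξ_i − s_i, and let J ⊆ R be the ideal generated by the elements s_j ξ_i − s_i ξ_j for all i, j. Consider the A-algebra homomorphism Φ : A[t_0,…,t_d] → R/J² sending t_i to the class of y_i. Then Φ is surjective, and its kernel is the ideal of A[t_0,…,t_d] generated by the products t_i t_j (for all 0 ≤ i, j ≤ d) together with the linear form ∑_{i=0}^{d}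 a_i t_i. -/
open MvPolynomial HomogeneousLocalization

attribute [local instance] MvPolynomial.gradedAlgebra

noncomputable section

variable {A : Type*} [CommRing A] {d : ℕ}

variable (a : Fin (d + 1) → A)

-- AUX
lemma fpow_mem (n : ℕ) : ((∑ i, C (a i) * X i : MvPolynomial (Fin (d+1)) A)) ^ n ∈
    homogeneousSubmodule (Fin (d+1)) A n := by
  simpa using SetLike.pow_mem_graded n (linear_mem_one a)

lemma smul_eq (c : A) (r : Rloc a) : c • r = algebraMap A (Rloc a) c * r := by
  obtain ⟨z, rfl⟩ := mk_surjective r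
  apply val_injective
  rw [val_mul, val_algebraMap', val_smul, val_mk, Localization.smul_mk,
    Localization.mk_mul, one_mul, smul_eq_C_mul]

lemma val_ξ (i : Fin (d+1)) : (ξ a i).val =
    Localization.mk (X i) ⟨∑ j, C (a j) * X j, Submonoid.mem_powers _⟩ := val_mk _

lemma aeval_ξ {n : ℕ} {p : MvPolynomial (Fin (d + 1)) A}
    (hp : p ∈ homogeneousSubmodule (Fin (d + 1)) A n) :
    aeval (ξ a) p = HomogeneousLocalization.mk
      ⟨n, ⟨p, hp⟩, ⟨(∑ i, C (a i) * X i) ^ n, fpow_mem a n⟩,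
        pow_mem (Submonoid.mem_powers _) n⟩ := by
  classical
  set F : MvPolynomial (Fin (d + 1)) A := ∑ i, C (a i) * X i with hF
  set Loc := Localization (Submonoid.powers F) with hLoc
  set φ : MvPolynomial (Fin (d + 1)) A →+* Loc := algebraMap _ _ with hφ
  set u : Loc := Localization.mk 1 ⟨F, Submonoid.mem_powers _⟩ with hu
  have hun : ∀ k : ℕ, u ^ k
      = Localization.mk 1 ⟨F ^ k, pow_mem (Submonoid.mem_powers _) k⟩ := by
    intro k
    rw [hu, Localization.mk_pow, one_pow]
    congr 1
  have hξv : ∀ i, (ξ a i).val = φ (X i) * u := by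
    intro i
    rw [val_ξ, hφ, ← Localization.mk_one_eq_algebraMap, hu, Localization.mk_mul, mul_one, one_mul]
  apply val_injective
  rw [val_mk]
  have hv : (aeval (ξ a) p).val
      = eval₂ ((algebraMap (Rloc a) Loc).comp (algebraMap A (Rloc a)))
          (fun i => (ξ a i).val) p := by
    rw [aeval_def]
    exact eval₂_comp_left (algebraMap (Rloc a) Loc) (algebraMap A (Rloc a)) (ξ a) p
  rw [hv, eval₂_eq]
  have hRHS : (Localization.mk (p : _) ⟨F ^ n, pow_mem (Submonoid.mem_powers _) n⟩ : Loc) = ∑ m ∈ p.support,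
      φ (monomial m (coeff m p))
        * Localization.mk 1 ⟨F ^ n, pow_mem (Submonoid.mem_powers _) n⟩ := by
    rw [← Finset.sum_mul, ← map_sum, p.support_sum_monomial_coeff, hφ,
      ← Localization.mk_one_eq_algebraMap, Localization.mk_mul, mul_one, one_mul]
  rw [hRHS]
  refine Finset.sum_congr rfl fun m hm => ?_
  have hdeg : ∑ i ∈ m.support, m i = n := by
    have h2 := hp (mem_support_iff.1 hm)
    rw [← Finsupp.degree_apply, Finsupp.degree_eq_weight_one]
    exact h2
  have h1 : ((algebraMap (Rloc a) Loc).comp (algebraMap A (Rloc a))) (coeff m p)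
      = φ (C (coeff m p)) := by
    rw [RingHom.comp_apply]
    show (algebraMap A (Rloc a) (coeff m p)).val = _
    rw [val_algebraMap', hφ, ← Localization.mk_one_eq_algebraMap]
  rw [h1]
  simp only [hξv, mul_pow, Finset.prod_mul_distrib, Finset.prod_pow_eq_pow_sum, hdeg, hun n]
  have h3 : φ ((monomial m) (coeff m p)) = φ (C (coeff m p)) * ∏ x ∈ m.support, φ (X x) ^ m x := by
    rw [monomial_eq, map_mul]
    congr 1
    rw [Finsupp.prod, map_prod]
    exact Finset.prod_congr rfl fun i _ => map_pow φ _ _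
  rw [h3, mul_assoc]

lemma aeval_ξ_surjective :
    Function.Surjective (aeval (ξ a) : MvPolynomial (Fin (d+1)) A →ₐ[A] Rloc a) := by
  intro z
  obtain ⟨w, rfl⟩ := mk_surjective z
  obtain ⟨k, hk⟩ := w.den_mem
  by_cases h0 : (w.den : MvPolynomial (Fin (d+1)) A) = 0
  · have h1 : (0 : MvPolynomial (Fin (d+1)) A) ∈ Submonoid.powers (∑ i, C (a i) * X i) :=
      h0 ▸ w.den_mem
    have := HomogeneousLocalization.subsingleton (homogeneousSubmodule (Fin (d+1)) A) h1
    exact ⟨0, Subsingleton.elim _ _⟩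
  · have hk' : k = w.deg := DirectSum.degree_eq_of_mem_mem
      (homogeneousSubmodule (Fin (d+1)) A) (hk ▸ fpow_mem a k) w.den.2 h0
    refine ⟨w.num, ?_⟩
    rw [aeval_ξ a w.num.2]
    apply val_injective
    rw [val_mk, val_mk]
    congr 1
    refine Subtype.ext ?_
    show (∑ i, C (a i) * X i) ^ w.deg = (w.den : MvPolynomial (Fin (d+1)) A)
    subst hk'
    exact hk

lemma sum_ai_ξ : ∑ i, algebraMap A (Rloc a) (a i) * ξ a i = 1 := by
  have h1 := aeval_ξ a (linear_mem_one a)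
  have h2 : aeval (ξ a) (∑ i, C (a i) * X i) = ∑ i, algebraMap A (Rloc a) (a i) * ξ a i := by
    rw [map_sum]
    exact Finset.sum_congr rfl fun i _ => by rw [map_mul, aeval_C, aeval_X]
  rw [← h2, h1]
  apply val_injective
  rw [val_mk, val_one]
  rw [← Localization.mk_one, Localization.mk_eq_mk_iff, Localization.r_iff_exists]
  exact ⟨1, by simp⟩


variable (s : Fin (d + 1) → A)

lemma y_eq (h : ∑ i, a i * s i = 1) (i : Fin (d+1)) :
    ξ a i - s i • (1 : Rloc a)
      = ∑ j, algebraMap A (Rloc a) (a j) * (s j • ξ a i - s i • ξ a j) := by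
  simp only [smul_eq a, mul_one, mul_sub, Finset.sum_sub_distrib]
  congr 1
  · simp only [← mul_assoc, ← map_mul, ← Finset.sum_mul, ← map_sum, h, map_one, one_mul]
  · rw [Finset.sum_congr rfl (fun j _ => mul_left_comm (algebraMap A (Rloc a) (a j))
      (algebraMap A (Rloc a) (s i)) (ξ a j)), ← Finset.mul_sum, sum_ai_ξ a, mul_one]

lemma y_mem_J (h : ∑ i, a i * s i = 1) (i : Fin (d+1)) :
    ξ a i - s i • (1 : Rloc a) ∈ Jid a s := by
  rw [y_eq a s h i]
  exact Ideal.sum_mem _ fun j _ => Ideal.mul_mem_left _ _ (Ideal.subset_span ⟨(i, j), rfl⟩)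

def Kid : Ideal (MvPolynomial (Fin (d + 1)) A) :=
  Ideal.span ((Set.range fun p : Fin (d + 1) × Fin (d + 1) =>
      (X p.1 * X p.2 : MvPolynomial (Fin (d + 1)) A)) ∪ {∑ i, C (a i) * X i})

lemma quot_algebraMap (c : A) :
    algebraMap A (MvPolynomial (Fin (d+1)) A ⧸ Kid a) c = Ideal.Quotient.mk (Kid a) (C c) := rfl

def αmap : MvPolynomial (Fin (d + 1)) A →ₐ[A] MvPolynomial (Fin (d + 1)) A ⧸ Kid a :=
  (Ideal.Quotient.mkₐ A (Kid a)).comp (aeval fun i => X i + C (s i))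

lemma αmap_X (i : Fin (d+1)) : αmap a s (X i) = Ideal.Quotient.mk (Kid a) (X i + C (s i)) := by
  simp [αmap]

lemma αmap_C (c : A) : αmap a s (C c) = Ideal.Quotient.mk (Kid a) (C c) := by
  simp [αmap]
  rfl

lemma αmap_f (h : ∑ i, a i * s i = 1) : αmap a s (∑ i, C (a i) * X i) = 1 := by
  have h1 : (aeval fun i => X i + C (s i)) (∑ i, C (a i) * X i)
      = (∑ i, C (a i) * X i) + C (1 : A) := by
    rw [map_sum]
    have h2 : ∀ i : Fin (d+1), (aeval fun i => X i + C (s i)) (C (a i) * X i)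
        = C (a i) * X i + C (a i * s i) := by
      intro i
      rw [map_mul, aeval_C, aeval_X, MvPolynomial.algebraMap_eq, mul_add, ← C_mul]
    rw [Finset.sum_congr rfl fun i _ => h2 i, Finset.sum_add_distrib,
      ← map_sum C (fun i => a i * s i) Finset.univ, h]
  rw [αmap, AlgHom.comp_apply, h1, map_add, Ideal.Quotient.mkₐ_eq_mk]
  have h3 : Ideal.Quotient.mk (Kid a) (∑ i, C (a i) * X i) = 0 := by
    rw [Ideal.Quotient.eq_zero_iff_mem]
    exact Ideal.subset_span (Set.mem_union_right _ rfl)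
  rw [h3, zero_add]
  show Ideal.Quotient.mk (Kid a) (C 1) = 1
  rw [C_1, map_one]

lemma αmap_unit (h : ∑ i, a i * s i = 1) :
    ∀ y : Submonoid.powers (∑ i : Fin (d+1), C (a i) * X i),
      IsUnit ((αmap a s).toRingHom (y : MvPolynomial (Fin (d+1)) A)) := by
  rintro ⟨y, n, rfl⟩
  show IsUnit (αmap a s (_ ^ n))
  rw [map_pow, αmap_f a s h, one_pow]
  exact isUnit_one

def ψmap (h : ∑ i, a i * s i = 1) : Rloc a →+* MvPolynomial (Fin (d + 1)) A ⧸ Kid a :=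
  (IsLocalization.lift (S := Localization (Submonoid.powers (∑ i : Fin (d+1), C (a i) * X i)))
      (αmap_unit a s h)).comp
    (algebraMap (Rloc a) (Localization (Submonoid.powers (∑ i : Fin (d+1), C (a i) * X i))))

lemma ψ_algebraMap (h : ∑ i, a i * s i = 1) (c : A) :
    ψmap a s h (algebraMap A (Rloc a) c)
      = algebraMap A (MvPolynomial (Fin (d + 1)) A ⧸ Kid a) c := by
  show IsLocalization.lift (αmap_unit a s h) ((algebraMap A (Rloc a) c).val) = _
  rw [val_algebraMap', Localization.mk_one_eq_algebraMap, IsLocalization.lift_eq]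
  show αmap a s (C c) = _
  rw [αmap_C, quot_algebraMap]

lemma ψ_ξ (h : ∑ i, a i * s i = 1) (i : Fin (d+1)) :
    ψmap a s h (ξ a i) = Ideal.Quotient.mk (Kid a) (X i + C (s i)) := by
  have hmul : (ξ a i).val * algebraMap _ (Localization (Submonoid.powers
        (∑ i : Fin (d+1), C (a i) * X i))) (∑ i : Fin (d+1), C (a i) * X i)
      = algebraMap (MvPolynomial (Fin (d+1)) A) _ (X i) := by
    rw [val_ξ, ← Localization.mk_one_eq_algebraMap, ← Localization.mk_one_eq_algebraMap,
      Localization.mk_mul, Localization.mk_eq_mk_iff, Localization.r_iff_exists]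
    exact ⟨1, by push_cast; ring⟩
  have h2 := congrArg (IsLocalization.lift (αmap_unit a s h)) hmul
  rw [map_mul, IsLocalization.lift_eq, IsLocalization.lift_eq] at h2
  have h3 : (αmap a s).toRingHom (∑ i : Fin (d+1), C (a i) * X i) = 1 := αmap_f a s h
  rw [h3, mul_one] at h2
  show IsLocalization.lift (αmap_unit a s h) (ξ a i).val = _
  rw [h2]
  exact αmap_X a s i

def Tid : Ideal (MvPolynomial (Fin (d + 1)) A ⧸ Kid a) :=
  Ideal.span (Set.range fun i : Fin (d+1) => Ideal.Quotient.mk (Kid a) (X i))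

lemma ψ_J_le (h : ∑ i, a i * s i = 1) :
    Ideal.map (ψmap a s h) (Jid a s) ≤ Tid a := by
  rw [Jid, Ideal.map_span, Ideal.span_le]
  rintro x ⟨y, ⟨p, rfl⟩, rfl⟩
  have hy : ψmap a s h (s p.2 • ξ a p.1 - s p.1 • ξ a p.2)
      = Ideal.Quotient.mk (Kid a) (C (s p.2)) * Ideal.Quotient.mk (Kid a) (X p.1) -
        Ideal.Quotient.mk (Kid a) (C (s p.1)) * Ideal.Quotient.mk (Kid a) (X p.2) := by
    rw [map_sub, smul_eq a, smul_eq a, map_mul, map_mul, ψ_algebraMap, ψ_algebraMap,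
      ψ_ξ a s h, ψ_ξ a s h, quot_algebraMap, quot_algebraMap, ← map_mul, ← map_mul, ← map_sub,
      show C (s p.2) * (X p.1 + C (s p.1)) - C (s p.1) * (X p.2 + C (s p.2))
        = C (s p.2) * X p.1 - C (s p.1) * X p.2 by ring, map_sub, map_mul, map_mul]
  rw [hy]
  have m1 : Ideal.Quotient.mk (Kid a) (X p.1) ∈ Tid a := Ideal.subset_span ⟨p.1, rfl⟩
  have m2 : Ideal.Quotient.mk (Kid a) (X p.2) ∈ Tid a := Ideal.subset_span ⟨p.2, rfl⟩
  exact sub_mem (Ideal.mul_mem_left _ _ m1) (Ideal.mul_mem_left _ _ m2)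

lemma T_sq : (Tid a) ^ 2 ≤ ⊥ := by
  rw [pow_two, Tid, Ideal.span_mul_span, Ideal.span_le]
  intro x hx
  rw [Set.mem_mul] at hx
  obtain ⟨u, ⟨i, rfl⟩, v, ⟨j, rfl⟩, rfl⟩ := hx
  rw [SetLike.mem_coe, Ideal.mem_bot, ← map_mul, Ideal.Quotient.eq_zero_iff_mem]
  exact Ideal.subset_span (Set.mem_union_left _ ⟨(i, j), rfl⟩)

lemma ψ_J2 (h : ∑ i, a i * s i = 1) :
    ∀ x ∈ (Jid a s) ^ 2, ψmap a s h x = 0 := by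
  intro x hx
  have h1 : ψmap a s h x ∈ Ideal.map (ψmap a s h) ((Jid a s) ^ 2) :=
    Ideal.mem_map_of_mem _ hx
  rw [Ideal.map_pow] at h1
  have h2 : (Ideal.map (ψmap a s h) (Jid a s)) ^ 2 ≤ ⊥ :=
    le_trans (Ideal.pow_right_mono (ψ_J_le a s h) 2) (T_sq a)
  exact (Ideal.mem_bot).1 (h2 h1)

lemma quot_algebraMap2 (c : A) : algebraMap A (Rloc a ⧸ (Jid a s)^2) c
    = Ideal.Quotient.mk ((Jid a s)^2) (algebraMap A (Rloc a) c) := rfl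

lemma sum_ai_y (h : ∑ i, a i * s i = 1) :
    ∑ i, algebraMap A (Rloc a) (a i) * (ξ a i - s i • (1 : Rloc a)) = 0 := by
  simp only [smul_eq a, mul_one, mul_sub, Finset.sum_sub_distrib, sum_ai_ξ a,
    ← map_mul, ← map_sum, h, map_one, sub_self]


/-- With `yᵢ := ξᵢ - sᵢ·1` in `Rloc a` and `J` the localized ideal of the section, the
`A`-algebra homomorphism `Φ : A[t_0, …, t_d] → Rloc a / J²` sending `tᵢ` to the class of `yᵢ`
is surjective, and its kernel is the ideal generated by the products `tᵢ tⱼ` (for all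
`0 ≤ i, j ≤ d`) together with the linear form `∑ aᵢ tᵢ`. -/
theorem stmt_5 {A : Type*} [CommRing A] (d : ℕ) (s a : Fin (d + 1) → A)
    (h : ∑ i, a i * s i = 1) :
    Function.Surjective
      (aeval fun i => Ideal.Quotient.mk ((Jid a s) ^ 2) (ξ a i - s i • (1 : Rloc a)) :
        MvPolynomial (Fin (d + 1)) A →ₐ[A] Rloc a ⧸ (Jid a s) ^ 2) ∧
    RingHom.ker
      (aeval fun i => Ideal.Quotient.mk ((Jid a s) ^ 2) (ξ a i - s i • (1 : Rloc a)) :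
        MvPolynomial (Fin (d + 1)) A →ₐ[A] Rloc a ⧸ (Jid a s) ^ 2).toRingHom =
      Ideal.span ((Set.range fun p : Fin (d + 1) × Fin (d + 1) =>
          (X p.1 * X p.2 : MvPolynomial (Fin (d + 1)) A)) ∪
        {∑ i, C (a i) * X i}) := by
  set Φ : MvPolynomial (Fin (d + 1)) A →ₐ[A] Rloc a ⧸ (Jid a s) ^ 2 :=
    aeval fun i => Ideal.Quotient.mk ((Jid a s) ^ 2) (ξ a i - s i • (1 : Rloc a)) with hΦdef
  have hKid : Ideal.span ((Set.range fun p : Fin (d + 1) × Fin (d + 1) =>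
      (X p.1 * X p.2 : MvPolynomial (Fin (d + 1)) A)) ∪ {∑ i, C (a i) * X i}) = Kid a := rfl
  rw [hKid]
  set Ψ : Rloc a ⧸ (Jid a s) ^ 2 →+* MvPolynomial (Fin (d + 1)) A ⧸ Kid a :=
    Ideal.Quotient.lift ((Jid a s) ^ 2) (ψmap a s h) (ψ_J2 a s h) with hΨdef
  have hfact : ∀ p : MvPolynomial (Fin (d + 1)) A,
      Φ p = Ideal.Quotient.mk ((Jid a s) ^ 2)
        (aeval (fun i => ξ a i - s i • (1 : Rloc a)) p) := by
    intro p
    have h1 := congrFun (congrArg (fun (g : MvPolynomial (Fin (d + 1)) A →ₐ[A] _) =>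
      (g : MvPolynomial (Fin (d + 1)) A → _))
      (comp_aeval (fun i => ξ a i - s i • (1 : Rloc a))
        (Ideal.Quotient.mkₐ A ((Jid a s) ^ 2)))) p
    exact h1.symm
  constructor
  · -- surjectivity
    intro z
    obtain ⟨zr, rfl⟩ := Ideal.Quotient.mk_surjective z
    obtain ⟨p, hp⟩ := aeval_ξ_surjective a zr
    refine ⟨aeval (fun i => X i + C (s i)) p, ?_⟩
    rw [hfact, ← AlgHom.comp_apply, comp_aeval]
    have he : (aeval fun i => (aeval fun i => ξ a i - s i • (1 : Rloc a))
          ((X i + C (s i) : MvPolynomial (Fin (d + 1)) A))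
        : MvPolynomial (Fin (d + 1)) A →ₐ[A] Rloc a) = aeval (ξ a) := by
      congr 1
      funext i
      rw [map_add, aeval_X, aeval_C, smul_eq a, mul_one, sub_add_cancel]
    rw [he, hp]
  · -- kernel
    have hext : Ψ.comp Φ.toRingHom = Ideal.Quotient.mk (Kid a) := by
      apply MvPolynomial.ringHom_ext
      · intro c
        show Ψ (Φ (C c)) = Ideal.Quotient.mk (Kid a) (C c)
        rw [hΦdef]
        show Ψ ((aeval fun i => Ideal.Quotient.mk ((Jid a s) ^ 2)
          (ξ a i - s i • (1 : Rloc a))) (C c)) = _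
        rw [aeval_C, quot_algebraMap2, hΨdef, Ideal.Quotient.lift_mk, ψ_algebraMap a s h,
          quot_algebraMap]
      · intro i
        show Ψ (Φ (X i)) = Ideal.Quotient.mk (Kid a) (X i)
        rw [hΦdef]
        show Ψ ((aeval fun i => Ideal.Quotient.mk ((Jid a s) ^ 2)
          (ξ a i - s i • (1 : Rloc a))) (X i)) = _
        rw [aeval_X, hΨdef, Ideal.Quotient.lift_mk, map_sub, ψ_ξ a s h, smul_eq a, mul_one,
          ψ_algebraMap a s h, quot_algebraMap, ← map_sub, add_sub_cancel_right]
    have hcomp : ∀ p : MvPolynomial (Fin (d + 1)) A,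
        Ψ (Φ p) = Ideal.Quotient.mk (Kid a) p := fun p => RingHom.congr_fun hext p
    apply le_antisymm
    · intro p hp
      have h1 : Φ p = 0 := hp
      have h2 := hcomp p
      rw [h1, map_zero] at h2
      exact Ideal.Quotient.eq_zero_iff_mem.1 h2.symm
    · rw [Kid, Ideal.span_le]
      rintro x hx
      rcases hx with ⟨p, rfl⟩ | hx
      · show Φ (X p.1 * X p.2) = 0
        rw [hΦdef]
        show (aeval fun i => Ideal.Quotient.mk ((Jid a s) ^ 2)
          (ξ a i - s i • (1 : Rloc a))) (X p.1 * X p.2) = 0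
        rw [map_mul, aeval_X, aeval_X, ← map_mul, Ideal.Quotient.eq_zero_iff_mem, pow_two]
        exact Ideal.mul_mem_mul (y_mem_J a s h p.1) (y_mem_J a s h p.2)
      · rcases hx with rfl
        show Φ (∑ i, C (a i) * X i) = 0
        have h5 : (aeval fun i => ξ a i - s i • (1 : Rloc a)) (∑ i, C (a i) * X i)
            = ∑ i, algebraMap A (Rloc a) (a i) * (ξ a i - s i • (1 : Rloc a)) := by
          rw [map_sum]
          exact Finset.sum_congr rfl fun i _ => by rw [map_mul, aeval_C, aeval_X]
        rw [hfact, h5, sum_ai_y a s h, map_zero]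

end
end

section
/- Let A be a commutative ring, d a natural number, s_0,…,s_d, a_0,…,a_d ∈ A with ∑ a_i s_i = 1, and f := ∑ a_i x_i ∈ A[x_0,…,x_d]. Let R be the degree-zero part of the localization of A[x_0,…,x_d] away from f, let ξ_i ∈ R be the class of x_i/f, and let J ⊆ R be the ideal generated by the elements s_j ξ_i − s_i ξ_j for all i, j. Then the A-linear map from the module of homogeneous degree-1 polynomials in A[x_0,…,x_d] to R/J², sending a linear form ℓ = ∑ c_i x_i to the class of ℓ/f = ∑ c_i ξ_i modulo J², is an isomorphism of A-modules. Equivalently, the A-linear map A^{d+1} → R/J² sending the standard basis vector e_i to the class of ξ_i is an A-module isomorphism. -/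
set_option synthInstance.maxHeartbeats 1000000
set_option maxHeartbeats 1000000


open MvPolynomial HomogeneousLocalization

attribute [local instance] MvPolynomial.gradedAlgebra

noncomputable section

variable {A : Type*} [CommRing A] {d : ℕ}

variable (a : Fin (d + 1) → A)

variable (s : Fin (d + 1) → A)

----------------------------------------------------------------------
-- Auxiliary development for `stmt_7`
----------------------------------------------------------------------

namespace Stmt7

/-- The linear form `f`. -/
abbrev fp : MvPolynomial (Fin (d + 1)) A := ∑ i, C (a i) * X i

lemma fp_pow_mem (k : ℕ) :
    (fp a) ^ k ∈ homogeneousSubmodule (Fin (d + 1)) A k := by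
  rw [mem_homogeneousSubmodule]
  simpa using ((mem_homogeneousSubmodule _ _).1 (linear_mem_one a)).pow k

/-- `p / f^k` as an element of `Rloc a`. -/
def θ (k : ℕ) (p : MvPolynomial (Fin (d + 1)) A)
    (hp : p ∈ homogeneousSubmodule (Fin (d + 1)) A k) : Rloc a :=
  HomogeneousLocalization.mk ⟨k, ⟨p, hp⟩, ⟨(fp a) ^ k, fp_pow_mem a k⟩, pow_mem (Submonoid.mem_powers _) k⟩

lemma val_theta (k p hp) : (θ a k p hp).val =
    Localization.mk p ⟨(fp a) ^ k, pow_mem (Submonoid.mem_powers _) k⟩ := rfl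

lemma val_xi (i : Fin (d + 1)) : (ξ a i).val =
    Localization.mk (X i) ⟨fp a, Submonoid.mem_powers _⟩ := rfl

lemma val_algebraMap' (r : A) :
    (algebraMap A (Rloc a) r).val = Localization.mk (C r) 1 := by
  have hmem : (C r : MvPolynomial (Fin (d + 1)) A) ∈ homogeneousSubmodule (Fin (d + 1)) A 0 :=
    (mem_homogeneousSubmodule _ _).2 (isHomogeneous_C _ r)
  have h1 : GradedRing.projZeroRingHom' (homogeneousSubmodule (Fin (d + 1)) A)
      (C r) = ⟨C r, hmem⟩ :=
    GradedRing.projZeroRingHom'_apply_coe _ (⟨C r, hmem⟩ : homogeneousSubmodule (Fin (d + 1)) A 0)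
  show (fromZeroRingHom _ _ (GradedRing.projZeroRingHom' _ (C r))).val = _
  rw [h1]
  show (HomogeneousLocalization.mk _).val = _
  rw [val_mk]
  congr 1

/-- bridge between the two scalar multiplications on `Rloc`. -/
lemma smul_eq (r : A) (z : Rloc a) : r • z = algebraMap A (Rloc a) r * z := by
  obtain ⟨c, rfl⟩ := mk_surjective z
  apply val_injective
  rw [val_mul, val_algebraMap', val_smul, val_mk, Localization.smul_mk,
    Localization.mk_mul, one_mul, smul_eq_C_mul]

lemma one_eq : (1 : Rloc a) = ∑ i, a i • ξ a i := by
  apply val_injective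
  rw [val_one]
  simp only [← HomogeneousLocalization.algebraMap_apply, map_sum]
  simp only [HomogeneousLocalization.algebraMap_apply, val_smul, val_xi, Localization.smul_mk, smul_eq_C_mul]
  rw [← Localization.mk_sum]
  exact (Localization.mk_self (⟨fp a, Submonoid.mem_powers _⟩ :
    Submonoid.powers (fp (A := A) (d := d) a))).symm

end Stmt7

namespace Stmt7
section

lemma theta_add (k : ℕ) (p q) (hp : p ∈ homogeneousSubmodule (Fin (d + 1)) A k)
    (hq : q ∈ homogeneousSubmodule (Fin (d + 1)) A k) :
    θ a k (p + q) (add_mem hp hq) = θ a k p hp + θ a k q hq := by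
  apply val_injective
  rw [val_add, val_theta, val_theta, val_theta, Localization.add_mk_self]

lemma theta_sum {ι : Type*} (k : ℕ) (t : Finset ι) (g : ι → MvPolynomial (Fin (d + 1)) A)
    (hg : ∀ i, g i ∈ homogeneousSubmodule (Fin (d + 1)) A k) :
    θ a k (∑ i ∈ t, g i) (sum_mem fun i _ => hg i) = ∑ i ∈ t, θ a k (g i) (hg i) := by
  apply val_injective
  rw [val_theta]
  simp only [← HomogeneousLocalization.algebraMap_apply, map_sum]
  simp only [HomogeneousLocalization.algebraMap_apply, val_theta]
  rw [Localization.mk_sum]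

lemma eq_C_of_mem_zero {p : MvPolynomial (Fin (d + 1)) A}
    (hp : p ∈ homogeneousSubmodule (Fin (d + 1)) A 0) : p = C (coeff 0 p) := by
  have hph := (mem_homogeneousSubmodule _ _).1 hp
  ext m
  by_cases hm : m = 0
  · subst hm; rw [coeff_zero_C]
  · rw [hph.coeff_eq_zero (by simpa [Finsupp.degree_eq_zero_iff] using hm), coeff_C,
      if_neg (by exact fun hmm => hm hmm.symm)]

lemma theta_zero (p) (hp : p ∈ homogeneousSubmodule (Fin (d + 1)) A 0) :
    θ a 0 p hp = algebraMap A (Rloc a) (coeff 0 p) := by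
  apply val_injective
  rw [val_theta, val_algebraMap']
  have h1 : (⟨fp a ^ 0, pow_mem (Submonoid.mem_powers _) 0⟩ :
      Submonoid.powers (fp (A := A) (d := d) a)) = 1 := Subtype.ext (pow_zero _)
  rw [h1, ← eq_C_of_mem_zero hp]

lemma degree_single_one (i : Fin (d + 1)) :
    (Finsupp.single i 1 : Fin (d + 1) →₀ ℕ).degree = 1 := by
  simp [Finsupp.degree_eq_weight_one, Finsupp.weight_apply, Finsupp.sum_single_index]

lemma theta_succ (k : ℕ) (α β : Fin (d + 1) →₀ ℕ) (c : A) (i : Fin (d + 1))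
    (hsplit : Finsupp.single i 1 + β = α)
    (hmem : monomial α c ∈ homogeneousSubmodule (Fin (d + 1)) A (k + 1))
    (hmem' : monomial β c ∈ homogeneousSubmodule (Fin (d + 1)) A k) :
    θ a (k + 1) (monomial α c) hmem = ξ a i * θ a k (monomial β c) hmem' := by
  apply val_injective
  rw [val_mul, val_theta, val_theta, val_xi, Localization.mk_mul]
  have h1 : (⟨fp a, Submonoid.mem_powers _⟩ * ⟨fp a ^ k, pow_mem (Submonoid.mem_powers _) k⟩ :
      Submonoid.powers (fp (A := A) (d := d) a)) =
      ⟨fp a ^ (k + 1), pow_mem (Submonoid.mem_powers _) (k + 1)⟩ :=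
    Subtype.ext (pow_succ' _ _).symm
  rw [h1, ← hsplit, monomial_single_add, pow_one]

end
end Stmt7

namespace Stmt7
section

/-- The span of the classes of the `ξ i` in `Rloc a ⧸ J²`. -/
def SS : Submodule A (Rloc a ⧸ (Jid a s) ^ 2) :=
  Submodule.span A (Set.range fun i => Ideal.Quotient.mk ((Jid a s) ^ 2) (ξ a i))

lemma Q_algebraMap (r : A) :
    Ideal.Quotient.mk ((Jid a s) ^ 2) (algebraMap A (Rloc a) r) =
      algebraMap A (Rloc a ⧸ (Jid a s) ^ 2) r := by
  rw [← Ideal.Quotient.mkₐ_eq_mk A]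
  exact (Ideal.Quotient.mkₐ A ((Jid a s) ^ 2)).commutes r

lemma Q_smul (r : A) (z : Rloc a) :
    Ideal.Quotient.mk ((Jid a s) ^ 2) (r • z) = r • Ideal.Quotient.mk ((Jid a s) ^ 2) z := by
  rw [smul_eq, map_mul, Q_algebraMap, ← Algebra.smul_def]

lemma xi_sub_mem (h : ∑ i, a i * s i = 1) (i : Fin (d + 1)) :
    ξ a i - s i • (1 : Rloc a) ∈ Jid a s := by
  have key : ξ a i - s i • (1 : Rloc a) =
      ∑ j, algebraMap A (Rloc a) (a j) * (s j • ξ a i - s i • ξ a j) := by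
    simp only [smul_eq, mul_sub]
    rw [Finset.sum_sub_distrib]
    congr 1
    · simp only [← mul_assoc, ← map_mul]
      rw [← Finset.sum_mul, ← map_sum, h, map_one, one_mul]
    · rw [one_eq a, Finset.mul_sum]
      refine Finset.sum_congr rfl fun j _ => ?_
      rw [smul_eq]
      ring
  rw [key]
  refine sum_mem fun j _ => Ideal.mul_mem_left _ _ ?_
  exact Ideal.subset_span ⟨(i, j), rfl⟩

lemma Q_xi_mul (h : ∑ i, a i * s i = 1) (i j : Fin (d + 1)) :
    Ideal.Quotient.mk ((Jid a s) ^ 2) (ξ a i) * Ideal.Quotient.mk ((Jid a s) ^ 2) (ξ a j) =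
      s i • Ideal.Quotient.mk ((Jid a s) ^ 2) (ξ a j)
        + s j • Ideal.Quotient.mk ((Jid a s) ^ 2) (ξ a i)
        - (s i * s j) • (1 : Rloc a ⧸ (Jid a s) ^ 2) := by
  have hz : Ideal.Quotient.mk ((Jid a s) ^ 2)
      ((ξ a i - s i • 1) * (ξ a j - s j • 1)) = 0 := by
    refine Ideal.Quotient.eq_zero_iff_mem.2 ?_
    rw [pow_two]
    exact Ideal.mul_mem_mul (xi_sub_mem a s h i) (xi_sub_mem a s h j)
  rw [map_mul, map_sub, map_sub, Q_smul, Q_smul, map_one] at hz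
  simp only [Algebra.smul_def, mul_one, map_mul] at hz ⊢
  linear_combination hz

lemma one_mem_SS (h : ∑ i, a i * s i = 1) : (1 : Rloc a ⧸ (Jid a s) ^ 2) ∈ SS a s := by
  have : (1 : Rloc a ⧸ (Jid a s) ^ 2) =
      ∑ i, a i • Ideal.Quotient.mk ((Jid a s) ^ 2) (ξ a i) := by
    rw [← map_one (Ideal.Quotient.mk ((Jid a s) ^ 2)), one_eq a, map_sum]
    exact Finset.sum_congr rfl fun i _ => Q_smul a s (a i) (ξ a i)
  rw [this]
  exact sum_mem fun i _ => Submodule.smul_mem _ _ (Submodule.subset_span ⟨i, rfl⟩)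

lemma mul_xi_mem (h : ∑ i, a i * s i = 1) (i : Fin (d + 1)) {x : Rloc a ⧸ (Jid a s) ^ 2}
    (hx : x ∈ SS a s) : Ideal.Quotient.mk ((Jid a s) ^ 2) (ξ a i) * x ∈ SS a s := by
  induction hx using Submodule.span_induction with
  | mem y hy =>
    obtain ⟨j, rfl⟩ := hy
    rw [Q_xi_mul a s h i j]
    refine sub_mem (add_mem ?_ ?_) ?_
    · exact Submodule.smul_mem _ _ (Submodule.subset_span ⟨j, rfl⟩)
    · exact Submodule.smul_mem _ _ (Submodule.subset_span ⟨i, rfl⟩)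
    · exact Submodule.smul_mem _ _ (one_mem_SS a s h)
  | zero => rw [mul_zero]; exact zero_mem _
  | add y z _ _ hy hz => rw [mul_add]; exact add_mem hy hz
  | smul r y _ hy => rw [mul_smul_comm]; exact Submodule.smul_mem _ _ hy

lemma theta_congr (k : ℕ) (p q) (hpq : p = q)
    (hp : p ∈ homogeneousSubmodule (Fin (d + 1)) A k) :
    θ a k p hp = θ a k q (hpq ▸ hp) := by subst hpq; rfl

lemma theta_mem_SS (h : ∑ i, a i * s i = 1) :
    ∀ (k : ℕ) (p : MvPolynomial (Fin (d + 1)) A)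
      (hp : p ∈ homogeneousSubmodule (Fin (d + 1)) A k),
      Ideal.Quotient.mk ((Jid a s) ^ 2) (θ a k p hp) ∈ SS a s := by
  intro k
  induction k with
  | zero =>
    intro p hp
    rw [theta_zero, Q_algebraMap, Algebra.algebraMap_eq_smul_one]
    exact Submodule.smul_mem _ _ (one_mem_SS a s h)
  | succ k ih =>
    intro p hp
    have hph := (mem_homogeneousSubmodule _ _).1 hp
    have hmono : ∀ α : Fin (d + 1) →₀ ℕ,
        monomial α (coeff α p) ∈ homogeneousSubmodule (Fin (d + 1)) A (k + 1) := by
      intro α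
      by_cases hc : coeff α p = 0
      · rw [hc, map_zero]; exact zero_mem _
      · refine (mem_homogeneousSubmodule _ _).2 (isHomogeneous_monomial _ ?_)
        rw [Finsupp.degree_eq_weight_one]
        exact hph hc
    rw [theta_congr a (k + 1) p _ (as_sum p) hp, theta_sum a (k + 1) p.support _
      (fun α => hmono α), map_sum]
    refine sum_mem fun α hα => ?_
    by_cases hc : coeff α p = 0
    · have hzero : θ a (k + 1) (monomial α (coeff α p)) (hmono α) = 0 := by
        apply mk_eq_zero_of_num
        exact Subtype.ext (show (monomial α (coeff α p) : MvPolynomial (Fin (d + 1)) A) = 0 by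
          rw [hc, map_zero])
      rw [hzero, map_zero]; exact zero_mem _
    · have hd1 : α.degree = k + 1 := by
        rw [Finsupp.degree_eq_weight_one]; exact hph hc
      have hα0 : α ≠ 0 := by
        intro h0; rw [h0] at hd1
        simp [Finsupp.degree] at hd1
      obtain ⟨i, hi⟩ : ∃ i, α i ≠ 0 := by
        by_contra hno; push_neg at hno
        exact hα0 (Finsupp.ext hno)
      have hle : Finsupp.single i 1 ≤ α := Finsupp.single_le_iff.2 (Nat.one_le_iff_ne_zero.2 hi)
      have hsplit : Finsupp.single i 1 + (α - Finsupp.single i 1) = α := add_tsub_cancel_of_le hle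
      have hβd : (α - Finsupp.single i 1).degree = k := by
        have h2 : (Finsupp.single i 1 : Fin (d + 1) →₀ ℕ).degree
            + (α - Finsupp.single i 1).degree = α.degree := by
          simp only [Finsupp.degree_eq_weight_one]
          rw [← map_add, hsplit]
        rw [degree_single_one, hd1] at h2
        omega
      have hmem' : monomial (α - Finsupp.single i 1) (coeff α p)
          ∈ homogeneousSubmodule (Fin (d + 1)) A k :=
        (mem_homogeneousSubmodule _ _).2 (isHomogeneous_monomial _ hβd)
      rw [theta_succ a k α _ (coeff α p) i hsplit (hmono α) hmem', map_mul]
      exact mul_xi_mem a s h i (ih _ hmem')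

lemma mem_SS (h : ∑ i, a i * s i = 1) (z : Rloc a ⧸ (Jid a s) ^ 2) : z ∈ SS a s := by
  obtain ⟨y, rfl⟩ := Ideal.Quotient.mk_surjective z
  obtain ⟨c, rfl⟩ := mk_surjective y
  rcases subsingleton_or_nontrivial A with hA | hA
  · have hs : Subsingleton (MvPolynomial (Fin (d + 1)) A) :=
      ⟨fun p q => by ext m; exact Subsingleton.elim _ _⟩
    have : Subsingleton (Rloc a) :=
      HomogeneousLocalization.subsingleton _ ⟨1, Subsingleton.elim _ _⟩
    rw [Subsingleton.elim (HomogeneousLocalization.mk c) 0, map_zero]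
    exact zero_mem _
  · obtain ⟨k, hk⟩ := c.den_mem
    have hk' : (fp a : MvPolynomial (Fin (d + 1)) A) ^ k = ↑c.den := hk
    have hne : (fp a : MvPolynomial (Fin (d + 1)) A) ^ k ≠ 0 := by
      intro h0
      have h1 := congrArg (eval s) h0
      rw [map_pow, map_zero] at h1
      have hev : eval s (fp a) = 1 := by
        rw [show (fp a : MvPolynomial (Fin (d + 1)) A) = ∑ i, C (a i) * X i from rfl, map_sum]
        simp only [map_mul, eval_C, eval_X]
        exact h
      rw [hev, one_pow] at h1
      exact one_ne_zero h1
    have hdeg : k = c.deg :=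
      DirectSum.degree_eq_of_mem_mem (ℳ := homogeneousSubmodule (Fin (d + 1)) A)
        (fp_pow_mem a k) (by rw [hk']; exact c.den.2) hne
    have hmkc : HomogeneousLocalization.mk c = θ a c.deg c.num.1 c.num.2 := by
      apply val_injective
      rw [val_mk, val_theta]
      congr 1
      refine Subtype.ext ?_
      show (c.den : MvPolynomial (Fin (d + 1)) A) = fp a ^ c.deg
      rw [← hk', hdeg]
    rw [hmkc]
    exact theta_mem_SS a s h c.deg _ _

end
end Stmt7

namespace Stmt7
section

/-- Evaluation `x i ↦ (s i, e i)` into the square-zero extension. -/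
def Φm : MvPolynomial (Fin (d + 1)) A →+* TrivSqZeroExt A (Fin (d + 1) → A) :=
  (MvPolynomial.eval₂Hom (algebraMap A (TrivSqZeroExt A (Fin (d + 1) → A)))
    (fun i => TrivSqZeroExt.inl (s i) + TrivSqZeroExt.inr ((Pi.single i 1 : Fin (d + 1) → A))))

lemma Φm_X (i : Fin (d + 1)) :
    Φm s (X i) = TrivSqZeroExt.inl (s i)
      + TrivSqZeroExt.inr ((Pi.single i 1 : Fin (d + 1) → A)) := by
  simp [Φm]

lemma Φm_C (r : A) : Φm s (C r) = algebraMap A (TrivSqZeroExt A (Fin (d + 1) → A)) r := by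
  simp [Φm]

lemma sum_smul_single (c : Fin (d + 1) → A) :
    ∑ i, c i • (Pi.single i 1 : Fin (d + 1) → A) = c := by
  have h1 : ∀ i : Fin (d + 1), c i • (Pi.single i 1 : Fin (d + 1) → A) = Pi.single i (c i) := by
    intro i
    rw [← Pi.single_smul, smul_eq_mul, mul_one]
  rw [Finset.sum_congr rfl fun i _ => h1 i]
  exact Finset.univ_sum_single c

lemma Φm_fp (h : ∑ i, a i * s i = 1) :
    Φm s (fp a) = TrivSqZeroExt.inl 1 + TrivSqZeroExt.inr a := by
  rw [show (fp a : MvPolynomial (Fin (d + 1)) A) = ∑ i, C (a i) * X i from rfl, map_sum]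
  have hterm : ∀ i : Fin (d + 1), Φm s (C (a i) * X i) =
      TrivSqZeroExt.inl (a i * s i)
        + TrivSqZeroExt.inr (a i • (Pi.single i 1 : Fin (d + 1) → A)) := by
    intro i
    rw [map_mul, Φm_C, Φm_X, TrivSqZeroExt.algebraMap_eq_inl', mul_add,
      TrivSqZeroExt.inl_mul_inl, TrivSqZeroExt.inl_mul_inr]
    rfl
  rw [Finset.sum_congr rfl fun i _ => hterm i]
  refine TrivSqZeroExt.ext ?_ ?_
  · simp only [TrivSqZeroExt.fst_sum, TrivSqZeroExt.fst_add, TrivSqZeroExt.fst_inl,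
      TrivSqZeroExt.fst_inr, add_zero, h]
  · simp only [TrivSqZeroExt.snd_sum, TrivSqZeroExt.snd_add, TrivSqZeroExt.snd_inl,
      TrivSqZeroExt.snd_inr, zero_add, sum_smul_single]

lemma Φm_unit (h : ∑ i, a i * s i = 1) : IsUnit (Φm s (fp a)) := by
  rw [TrivSqZeroExt.isUnit_iff_isUnit_fst, Φm_fp a s h]
  simpa using isUnit_one

lemma Φm_powers_unit (h : ∑ i, a i * s i = 1) :
    ∀ y : Submonoid.powers (fp (A := A) (d := d) a), IsUnit (Φm s y) := by
  rintro ⟨y, n, rfl⟩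
  show IsUnit (Φm s ((fp a : MvPolynomial (Fin (d + 1)) A) ^ n))
  rw [map_pow]
  exact (Φm_unit a s h).pow n

variable (hgu : ∀ y : Submonoid.powers (fp (A := A) (d := d) a), IsUnit (Φm s y))

/-- Lift of `Φm` to the localization. -/
def lift0 : Localization (Submonoid.powers (fp (A := A) (d := d) a))
    →+* TrivSqZeroExt A (Fin (d + 1) → A) := IsLocalization.lift hgu

/-- The retraction ring map `Rloc a → TrivSqZeroExt`. -/
def chi : Rloc a →+* TrivSqZeroExt A (Fin (d + 1) → A) :=
  (lift0 a s hgu).comp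
    (algebraMap (Rloc a) (Localization (Submonoid.powers (fp (A := A) (d := d) a))))

lemma lift0_algebraMap (q : MvPolynomial (Fin (d + 1)) A) :
    lift0 a s hgu (algebraMap _ _ q) = Φm s q := IsLocalization.lift_eq hgu q

lemma chi_mk (c : NumDenSameDeg (homogeneousSubmodule (Fin (d + 1)) A)
      (Submonoid.powers (∑ i, C (a i) * X i))) :
    Φm s (c.num : MvPolynomial (Fin (d + 1)) A) =
      Φm s (c.den : MvPolynomial (Fin (d + 1)) A)
        * chi a s hgu (HomogeneousLocalization.mk c) := by
  have h1 : chi a s hgu (HomogeneousLocalization.mk c) = lift0 a s hgu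
      (Localization.mk (c.num : MvPolynomial (Fin (d + 1)) A) ⟨c.den, c.den_mem⟩) := rfl
  have h2 : Localization.mk (c.num : MvPolynomial (Fin (d + 1)) A) ⟨c.den, c.den_mem⟩ *
      algebraMap (MvPolynomial (Fin (d + 1)) A)
        (Localization (Submonoid.powers (fp (A := A) (d := d) a)))
        (c.den : MvPolynomial (Fin (d + 1)) A) =
      algebraMap _ _ (c.num : MvPolynomial (Fin (d + 1)) A) := by
    rw [Localization.mk_eq_mk']
    exact IsLocalization.mk'_spec _ _ _
  have h3 := congrArg (lift0 a s hgu) h2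
  rw [map_mul, lift0_algebraMap, lift0_algebraMap] at h3
  rw [h1, ← h3]
  ring

lemma chi_algebraMap (r : A) :
    chi a s hgu (algebraMap A (Rloc a) r)
      = algebraMap A (TrivSqZeroExt A (Fin (d + 1) → A)) r := by
  have h1 : chi a s hgu (algebraMap A (Rloc a) r) =
      lift0 a s hgu ((algebraMap A (Rloc a) r).val) := rfl
  rw [h1, val_algebraMap', Localization.mk_one_eq_algebraMap, lift0_algebraMap, Φm_C]

/-- `chi` as an `A`-algebra map. -/
def chiA : Rloc a →ₐ[A] TrivSqZeroExt A (Fin (d + 1) → A) :=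
  { chi a s hgu with commutes' := chi_algebraMap a s hgu }

lemma chi_xi (h : ∑ i, a i * s i = 1) (i : Fin (d + 1)) :
    chi a s hgu (ξ a i) = TrivSqZeroExt.inl (s i)
      + TrivSqZeroExt.inr ((Pi.single i 1 : Fin (d + 1) → A) - s i • a) := by
  have hspec := chi_mk a s hgu ⟨1, ⟨X i, (mem_homogeneousSubmodule _ _).2 (isHomogeneous_X _ i)⟩,
    ⟨∑ j, C (a j) * X j, linear_mem_one a⟩, Submonoid.mem_powers _⟩
  rw [show HomogeneousLocalization.mk _ = ξ a i from rfl] at hspec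
  have hnum : Φm s ((⟨X i, (mem_homogeneousSubmodule _ _).2 (isHomogeneous_X _ i)⟩ :
      homogeneousSubmodule (Fin (d + 1)) A 1) : MvPolynomial (Fin (d + 1)) A) =
      TrivSqZeroExt.inl (s i)
        + TrivSqZeroExt.inr ((Pi.single i 1 : Fin (d + 1) → A)) := Φm_X s i
  have hden : Φm s ((⟨∑ j, C (a j) * X j, linear_mem_one a⟩ :
      homogeneousSubmodule (Fin (d + 1)) A 1) : MvPolynomial (Fin (d + 1)) A) =
      TrivSqZeroExt.inl 1 + TrivSqZeroExt.inr a := Φm_fp a s h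
  rw [hnum, hden] at hspec
  set u := chi a s hgu (ξ a i) with hu
  have hfst : TrivSqZeroExt.fst u = s i := by
    have h2 := congrArg TrivSqZeroExt.fst hspec
    simpa using h2.symm
  have hsnd : TrivSqZeroExt.snd u = (Pi.single i 1 : Fin (d + 1) → A) - s i • a := by
    have h2 := congrArg TrivSqZeroExt.snd hspec
    simp only [TrivSqZeroExt.snd_add, TrivSqZeroExt.snd_inl, TrivSqZeroExt.snd_inr,
      TrivSqZeroExt.snd_mul, TrivSqZeroExt.fst_add, TrivSqZeroExt.fst_inl,
      TrivSqZeroExt.fst_inr, zero_add, add_zero, one_smul, op_smul_eq_smul] at h2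
    rw [hfst] at h2
    exact eq_sub_of_add_eq h2.symm
  calc u = TrivSqZeroExt.inl u.fst + TrivSqZeroExt.inr u.snd :=
        (TrivSqZeroExt.inl_fst_add_inr_snd_eq u).symm
    _ = _ := by rw [hfst, hsnd]

lemma fst_chi_J {x : Rloc a} (hx : x ∈ Jid a s) (h : ∑ i, a i * s i = 1) :
    TrivSqZeroExt.fst (chi a s hgu x) = 0 := by
  induction hx using Submodule.span_induction with
  | mem y hy =>
    obtain ⟨⟨i, j⟩, rfl⟩ := hy
    show TrivSqZeroExt.fst (chi a s hgu (s j • ξ a i - s i • ξ a j)) = 0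
    rw [smul_eq, smul_eq, map_sub, map_mul, map_mul, chi_algebraMap, chi_algebraMap,
      chi_xi a s hgu h, chi_xi a s hgu h]
    simp only [TrivSqZeroExt.fst_sub, TrivSqZeroExt.fst_mul, TrivSqZeroExt.fst_add,
      TrivSqZeroExt.fst_inl, TrivSqZeroExt.fst_inr, TrivSqZeroExt.algebraMap_eq_inl',
      add_zero]
    show algebraMap A A (s j) * s i - algebraMap A A (s i) * s j = 0
    simp only [Algebra.algebraMap_self, RingHom.id_apply]
    ring
  | zero => rw [map_zero, TrivSqZeroExt.fst_zero]
  | add y z _ _ hy hz => rw [map_add, TrivSqZeroExt.fst_add, hy, hz, add_zero]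
  | smul r y _ hy => rw [smul_eq_mul, map_mul, TrivSqZeroExt.fst_mul, hy, mul_zero]

lemma chi_J2 (h : ∑ i, a i * s i = 1) :
    ∀ x ∈ (Jid a s) ^ 2, chi a s hgu x = 0 := by
  intro x hx
  rw [pow_two] at hx
  refine Submodule.mul_induction_on hx ?_ ?_
  · intro m hm n hn
    rw [map_mul]
    refine TrivSqZeroExt.ext ?_ ?_
    · rw [TrivSqZeroExt.fst_mul, fst_chi_J a s hgu hm h, zero_mul, TrivSqZeroExt.fst_zero]
    · rw [TrivSqZeroExt.snd_mul, fst_chi_J a s hgu hm h, fst_chi_J a s hgu hn h,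
        TrivSqZeroExt.snd_zero, zero_smul, MulOpposite.op_zero, zero_smul, add_zero]
  · intro y z hy hz
    rw [map_add, hy, hz, add_zero]

/-- The induced algebra map on the quotient. -/
def chiQ (h : ∑ i, a i * s i = 1) :
    (Rloc a ⧸ (Jid a s) ^ 2) →ₐ[A] TrivSqZeroExt A (Fin (d + 1) → A) :=
  Ideal.Quotient.liftₐ _ (chiA a s hgu) (chi_J2 a s hgu h)

lemma chiQ_mk (h : ∑ i, a i * s i = 1) (z : Rloc a) :
    chiQ a s hgu h (Ideal.Quotient.mk ((Jid a s) ^ 2) z) = chi a s hgu z := by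
  rfl

/-- The left inverse `Rloc a ⧸ J² → A^{d+1}`. -/
def Lmap (h : ∑ i, a i * s i = 1) : (Rloc a ⧸ (Jid a s) ^ 2) →ₗ[A] (Fin (d + 1) → A) where
  toFun z := TrivSqZeroExt.snd (chiQ a s hgu h z) + TrivSqZeroExt.fst (chiQ a s hgu h z) • a
  map_add' x y := by
    simp only [map_add, TrivSqZeroExt.snd_add, TrivSqZeroExt.fst_add, add_smul]
    abel
  map_smul' r x := by
    simp only [map_smul, TrivSqZeroExt.snd_smul, TrivSqZeroExt.fst_smul, RingHom.id_apply,
      smul_add, smul_smul, smul_eq_mul]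

lemma Lmap_xi (h : ∑ i, a i * s i = 1) (i : Fin (d + 1)) :
    Lmap a s hgu h (Ideal.Quotient.mk ((Jid a s) ^ 2) (ξ a i))
      = (Pi.single i 1 : Fin (d + 1) → A) := by
  rw [Lmap]
  show TrivSqZeroExt.snd (chiQ a s hgu h (Ideal.Quotient.mk _ (ξ a i)))
      + TrivSqZeroExt.fst (chiQ a s hgu h (Ideal.Quotient.mk _ (ξ a i))) • a = _
  rw [chiQ_mk, chi_xi a s hgu h]
  simp only [TrivSqZeroExt.snd_add, TrivSqZeroExt.snd_inl, TrivSqZeroExt.snd_inr,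
    TrivSqZeroExt.fst_add, TrivSqZeroExt.fst_inl, TrivSqZeroExt.fst_inr, zero_add, add_zero]
  exact sub_add_cancel _ _

end
end Stmt7


open Stmt7

/-- The `A`-linear map `A^{d+1} → Rloc a / J²` sending the standard basis vector `eᵢ` to the
class of `ξᵢ` (equivalently, sending a linear form `ℓ = ∑ cᵢ xᵢ` of `A[x_0, …, x_d]` to the
class of `ℓ/f = ∑ cᵢ ξᵢ` modulo `J²`) is an isomorphism of `A`-modules. -/
theorem stmt_7 {A : Type*} [CommRing A] (d : ℕ) (s a : Fin (d + 1) → A)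
    (h : ∑ i, a i * s i = 1) :
    Function.Bijective
      (Fintype.linearCombination A
        (fun i => Ideal.Quotient.mk ((Jid a s) ^ 2) (ξ a i)) :
        (Fin (d + 1) → A) →ₗ[A] Rloc a ⧸ (Jid a s) ^ 2) := by
  set φ := (Fintype.linearCombination A
        (fun i => Ideal.Quotient.mk ((Jid a s) ^ 2) (ξ a i)) :
        (Fin (d + 1) → A) →ₗ[A] Rloc a ⧸ (Jid a s) ^ 2) with hφ
  have hgu := Φm_powers_unit a s h
  constructor
  · -- injective
    have hL : ∀ c : Fin (d + 1) → A, Lmap a s hgu h (φ c) = c := by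
      intro c
      rw [hφ, Fintype.linearCombination_apply, map_sum]
      have hterm : ∀ i : Fin (d + 1),
          Lmap a s hgu h (c i • Ideal.Quotient.mk ((Jid a s) ^ 2) (ξ a i))
            = c i • (Pi.single i 1 : Fin (d + 1) → A) := by
        intro i
        rw [map_smul, Lmap_xi]
      rw [Finset.sum_congr rfl fun i _ => hterm i]
      exact sum_smul_single c
    exact Function.LeftInverse.injective hL
  · -- surjective
    intro z
    have hz : z ∈ SS a s := mem_SS a s h z
    have hrange : LinearMap.range φ = SS a s := by
      rw [hφ, Fintype.range_linearCombination]
      rfl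
    rw [← hrange] at hz
    exact hz


end
end
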